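/- arXiv:1704.05557 — 6 statements merged into one kernel-verified Lean document; each statement's English description precedes it below -/
import Mathlib

section
/- For all integers ℓ, m ≥ 0, the number b_{ℓ,m} := C(2(ℓ+1), ℓ+1) · C(2(m+1), m+1) · (ℓ+1)(m+1) / (2(ℓ+m+1)(ℓ+m+2)) is a positive integer (where C(n,k) denotes the binomial coefficient). -/
open Nat

noncomputable def halfS (m n : ℕ) : ℚ :=
  ((2*m+2).factorial * (2*n+2).factorial : ℚ) /
    (2 * (m+1).factorial * (n+1).factorial * (m+n+2).factorial)

def t : ℕ → ℕ → ℤ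
  | 0, n => catalan (n+1)
  | m+1, n => 4 * t m n - t m (n+1)

lemma fne (n : ℕ) : (n.factorial : ℚ) ≠ 0 := by exact_mod_cast n.factorial_ne_zero

lemma fsucc (n : ℕ) : ((n+1).factorial : ℚ) = (n+1) * n.factorial := by
  exact_mod_cast congrArg (Nat.cast (R:=ℚ)) (Nat.factorial_succ n)

lemma t_eq (m n : ℕ) : (t m n : ℚ) = halfS m n := by
  induction m generalizing n with
  | zero =>
    have h1 : (n+1+1) * catalan (n+1) = (n+1).centralBinom :=
      succ_mul_catalan_eq_centralBinom (n+1)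
    have h2 := Nat.choose_mul_factorial_mul_factorial (show n+1 ≤ 2*(n+1) by omega)
    rw [show 2*(n+1) - (n+1) = n+1 by omega] at h2
    have key : catalan (n+1) * ((n+1).factorial * (n+2).factorial) = (2*(n+1)).factorial := by
      calc catalan (n+1) * ((n+1).factorial * (n+2).factorial)
          = ((n+1+1) * catalan (n+1)) * (n+1).factorial * (n+1).factorial := by
            rw [Nat.factorial_succ (n+1)]; ring
        _ = (n+1).centralBinom * (n+1).factorial * (n+1).factorial := by rw [h1]
        _ = (2*(n+1)).factorial := by rw [Nat.centralBinom]; exact h2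
    have keyQ : (catalan (n+1) : ℚ) * ((n+1).factorial * (n+2).factorial)
        = ((2*(n+1)).factorial : ℚ) := by exact_mod_cast congrArg (Nat.cast (R:=ℚ)) key
    show (catalan (n+1) : ℚ) = halfS 0 n
    rw [halfS, show 2*0+2 = 2 by norm_num, show 2*n+2 = 2*(n+1) by ring,
      show (0:ℕ)+n+2 = n+2 by omega]
    rw [show (Nat.factorial 2 : ℚ) = 2 by norm_num, show (Nat.factorial 1 : ℚ) = 1 by norm_num]
    field_simp
    linear_combination keyQ
  | succ m ih =>
    show ((4 * t m n - t m (n+1) : ℤ) : ℚ) = halfS (m+1) n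
    push_cast
    rw [ih, ih]
    rw [halfS, halfS, halfS]
    rw [show 2*(m+1)+2 = 2*m+2+1+1 by ring, show 2*(n+1)+2 = 2*n+2+1+1 by ring,
      show m+1+n+2 = m+n+2+1 by ring, show m+(n+1)+2 = m+n+2+1 by ring]
    rw [fsucc (2*m+2+1), fsucc (2*m+2), fsucc (2*n+2+1), fsucc (2*n+2),
      fsucc (m+n+2), fsucc (m+1), fsucc (n+1)]
    have h1 := fne (2*m+2); have h2 := fne (2*n+2); have h3 := fne (m+1)
    have h4 := fne (n+1); have h5 := fne (m+n+2)
    field_simp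
    push_cast
    ring

lemma choose_cast_eq (a : ℕ) :
    ((Nat.choose (2*(a+1)) (a+1) : ℕ) : ℚ) = (2*a+2).factorial / ((a+1).factorial * (a+1).factorial) := by
  rw [Nat.cast_choose ℚ (show a+1 ≤ 2*(a+1) by omega), show 2*(a+1) - (a+1) = a+1 by omega,
    show 2*(a+1) = 2*a+2 by ring]

noncomputable def b (l m : ℕ) : ℚ :=
  (Nat.choose (2 * (l + 1)) (l + 1) : ℚ) * (Nat.choose (2 * (m + 1)) (m + 1) : ℚ) *
    ((l + 1) * (m + 1)) / (2 * (l + m + 1) * (l + m + 2))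

lemma b_eq (l m : ℕ) : b l m = ((t l m * (l+m).choose l : ℤ) : ℚ) := by
  push_cast
  rw [t_eq, halfS, b, choose_cast_eq l, choose_cast_eq m]
  rw [Nat.cast_choose ℚ (show l ≤ l+m by omega), show l+m-l = m by omega]
  rw [show l+m+2 = l+m+1+1 by ring, fsucc (l+m+1), fsucc (l+m), fsucc l, fsucc m]
  push_cast
  have h1 := fne (2*l+2); have h2 := fne (2*m+2); have h3 := fne l
  have h4 := fne m; have h5 := fne (l+m)
  have h6 : ((l:ℚ)+m+1) ≠ 0 := by positivity
  have h7 : ((l:ℚ)+m+2) ≠ 0 := by positivity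
  have h8 : ((l:ℚ)+1) ≠ 0 := by positivity
  have h9 : ((m:ℚ)+1) ≠ 0 := by positivity
  field_simp
  ring

theorem stmt_0 (l m : ℕ) : ∃ k : ℕ, 0 < k ∧ b l m = (k : ℚ) := by
  have hpos : 0 < b l m := by
    rw [b]
    have c1 : 0 < (Nat.choose (2*(l+1)) (l+1) : ℚ) := by
      exact_mod_cast Nat.choose_pos (show l+1 ≤ 2*(l+1) by omega)
    have c2 : 0 < (Nat.choose (2*(m+1)) (m+1) : ℚ) := by
      exact_mod_cast Nat.choose_pos (show m+1 ≤ 2*(m+1) by omega)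
    positivity
  have heq := b_eq l m
  set z : ℤ := t l m * (l+m).choose l with hz
  have hzpos : 0 < z := by
    have : (0:ℚ) < (z:ℚ) := heq ▸ hpos
    exact_mod_cast this
  refine ⟨z.toNat, by omega, ?_⟩
  rw [heq]
  exact_mod_cast (Int.toNat_of_nonneg hzpos.le).symm
end

section
/- For all ℓ ≥ 0, b_{ℓ,1} = 2·(Cat(ℓ+2) − Cat(ℓ+1)), where Cat(n) is the n-th Catalan number and b_{ℓ,m} = C(2(ℓ+1), ℓ+1)·C(2(m+1), m+1)·(ℓ+1)(m+1)/(2(ℓ+m+1)(ℓ+m+2)). -/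
theorem stmt_2 (l : ℕ) :
    b l 1 = 2 * ((catalan (l + 2) : ℚ) - (catalan (l + 1) : ℚ)) := by
  have h1 : ((l : ℚ) + 2) * (catalan (l + 1) : ℚ) = (Nat.centralBinom (l + 1) : ℚ) := by
    exact_mod_cast congrArg (Nat.cast : ℕ → ℚ) (succ_mul_catalan_eq_centralBinom (l + 1))
  have h2 : ((l : ℚ) + 3) * (catalan (l + 2) : ℚ) = (Nat.centralBinom (l + 2) : ℚ) := by
    exact_mod_cast congrArg (Nat.cast : ℕ → ℚ) (succ_mul_catalan_eq_centralBinom (l + 2))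
  have h3 : ((l : ℚ) + 2) * (Nat.centralBinom (l + 2) : ℚ)
      = 2 * (2 * (l : ℚ) + 3) * (Nat.centralBinom (l + 1) : ℚ) := by
    have := congrArg (Nat.cast : ℕ → ℚ) (Nat.succ_mul_centralBinom_succ (l + 1))
    push_cast at this
    linarith
  have hc : (Nat.choose (2 * (l + 1)) (l + 1) : ℚ) = (Nat.centralBinom (l + 1) : ℚ) := by
    rw [Nat.centralBinom]
  have h2' : ((l : ℚ) + 2) ≠ 0 := by positivity
  have h3' : ((l : ℚ) + 3) ≠ 0 := by positivity
  unfold b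
  rw [hc]
  push_cast
  field_simp
  norm_num [show Nat.choose 4 2 = 6 from rfl]
  linear_combination (-4 * ((l : ℚ) + 2)) * h2 - 4 * h3 + (4 * ((l : ℚ) + 3)) * h1
end

section
/- For all integers N ≥ 1 and 0 ≤ p ≤ N−1, the partial Catalan convolution satisfies: ∑_{j=0}^{p} Cat(j)·Cat(N−j) = (1/2)·(Cat(N+1) + b_{N−p,p} − b_{N−p−1,p+1}), where Cat is the Catalan number and b_{ℓ,m} = C(2(ℓ+1), ℓ+1)·C(2(m+1), m+1)·(ℓ+1)(m+1)/(2(ℓ+m+1)(ℓ+m+2)). -/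
private lemma choose_cat (n : ℕ) :
    ((Nat.choose (2 * (n + 1)) (n + 1)) : ℚ) = ((n : ℚ) + 2) * catalan (n + 1) := by
  have h1 : (n + 2) * catalan (n + 1) = Nat.centralBinom (n + 1) :=
    succ_mul_catalan_eq_centralBinom (n + 1)
  have h2 : Nat.choose (2 * (n + 1)) (n + 1) = (n + 2) * catalan (n + 1) := h1.symm
  rw [h2]; push_cast; ring

private lemma cat_rec' (n : ℕ) :
    ((catalan (n + 2)) : ℚ) = 2 * (2 * (n : ℚ) + 3) * catalan (n + 1) / ((n : ℚ) + 3) := by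
  have h : (n + 2) * Nat.centralBinom (n + 2) = 2 * (2 * (n + 1) + 1) * Nat.centralBinom (n + 1) :=
    Nat.succ_mul_centralBinom_succ (n + 1)
  have h1 : (n + 2) * catalan (n + 1) = Nat.centralBinom (n + 1) :=
    succ_mul_catalan_eq_centralBinom (n + 1)
  have h2 : (n + 3) * catalan (n + 2) = Nat.centralBinom (n + 2) :=
    succ_mul_catalan_eq_centralBinom (n + 2)
  have H : (n + 2) * ((n + 3) * catalan (n + 2)) = 2 * (2 * (n + 1) + 1) * ((n + 2) * catalan (n + 1)) := by
    rw [h1, h2]; exact h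
  have HQ : ((n : ℚ) + 2) * (((n : ℚ) + 3) * catalan (n + 2)) =
      2 * (2 * ((n : ℚ) + 1) + 1) * (((n : ℚ) + 2) * catalan (n + 1)) := by exact_mod_cast H
  have h2ne : ((n : ℚ) + 2) ≠ 0 := by positivity
  have key : ((n : ℚ) + 3) * catalan (n + 2) = 2 * (2 * (n : ℚ) + 3) * catalan (n + 1) := by
    apply mul_left_cancel₀ h2ne
    linear_combination HQ
  have h3ne : ((n : ℚ) + 3) ≠ 0 := by positivity
  field_simp
  linear_combination key

private lemma key (k p : ℕ) :
    2 * b (k + 1) (p + 1) =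
      b (k + 2) p + b k (p + 2) + 2 * (catalan (p + 1) : ℚ) * (catalan (k + 1) : ℚ) := by
  unfold b
  rw [choose_cat (k+2), choose_cat (k+1), choose_cat k, choose_cat (p+2), choose_cat (p+1),
    choose_cat p]
  simp only [show k+2+1 = k+1+2 from rfl, show k+1+1 = k+2 from rfl,
    show p+2+1 = p+1+2 from rfl, show p+1+1 = p+2 from rfl]
  rw [cat_rec' (k+1), cat_rec' k, cat_rec' (p+1), cat_rec' p]
  push_cast
  have h1 : ((k:ℚ)+3) ≠ 0 := by positivity
  have h2 : ((k:ℚ)+1+3) ≠ 0 := by positivity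
  have h3 : ((p:ℚ)+3) ≠ 0 := by positivity
  have h4 : ((p:ℚ)+1+3) ≠ 0 := by positivity
  have h5 : ((k:ℚ)+1+(p+1)+1) ≠ 0 := by positivity
  have h6 : ((k:ℚ)+1+(p+1)+2) ≠ 0 := by positivity
  have h7 : ((k:ℚ)+2+p+1) ≠ 0 := by positivity
  have h8 : ((k:ℚ)+2+p+2) ≠ 0 := by positivity
  have h9 : ((k:ℚ)+(p+2)+1) ≠ 0 := by positivity
  have h10 : ((k:ℚ)+(p+2)+2) ≠ 0 := by positivity
  field_simp
  ring

private lemma aux : ∀ p k : ℕ,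
    (∑ j ∈ Finset.range (p + 1), (catalan j : ℚ) * (catalan (p + k + 1 - j) : ℚ)) =
      (1 / 2) * ((catalan (p + k + 2) : ℚ) + b (k + 1) p - b k (p + 1)) := by
  intro p
  induction p with
  | zero =>
      intro k
      rw [show (0:ℕ)+1 = 1 from rfl, Finset.sum_range_one]
      simp only [catalan_zero, Nat.cast_one, one_mul]
      unfold b
      rw [choose_cat (k+1), choose_cat k, choose_cat 0, choose_cat 1]
      rw [show (0:ℕ)+k+1-0 = k+1 by omega, show (0:ℕ)+k+2 = k+2 by omega,
        show k+1+1 = k+2 from rfl]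
      rw [cat_rec' k]
      norm_num [catalan_one, catalan_two]
      have h1 : ((k:ℚ)+3) ≠ 0 := by positivity
      have h5 : ((k:ℚ)+1+0+1) ≠ 0 := by positivity
      have h6 : ((k:ℚ)+1+0+2) ≠ 0 := by positivity
      have h7 : ((k:ℚ)+(0+1)+1) ≠ 0 := by positivity
      have h8 : ((k:ℚ)+(0+1)+2) ≠ 0 := by positivity
      field_simp
      ring
  | succ p ih =>
      intro k
      rw [Finset.sum_range_succ]
      have e1 : (∑ j ∈ Finset.range (p + 1), (catalan j : ℚ) * (catalan (p + 1 + k + 1 - j) : ℚ))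
          = (∑ j ∈ Finset.range (p + 1), (catalan j : ℚ) * (catalan (p + (k + 1) + 1 - j) : ℚ)) := by
        apply Finset.sum_congr rfl
        intro j hj
        have : p + 1 + k + 1 - j = p + (k + 1) + 1 - j := by omega
        rw [this]
      rw [e1, ih (k + 1)]
      rw [show p + 1 + k + 1 - (p + 1) = k + 1 by omega]
      rw [show p + (k + 1) + 2 = p + 1 + k + 2 by omega]
      have hk := key k p
      linarith [hk]

theorem stmt_4 (N p : ℕ) (hN : 1 ≤ N) (hp : p ≤ N - 1) :
    (∑ j ∈ Finset.range (p + 1), (catalan j : ℚ) * (catalan (N - j) : ℚ)) =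
      (1 / 2) * ((catalan (N + 1) : ℚ) + b (N - p) p - b (N - p - 1) (p + 1)) := by
  obtain ⟨k, hk⟩ : ∃ k, N = p + k + 1 := ⟨N - p - 1, by omega⟩
  subst hk
  rw [show p + k + 1 - p = k + 1 by omega]
  rw [show k + 1 - 1 = k from rfl]
  rw [show p + k + 1 + 1 = p + k + 2 from rfl]
  exact aux p k
end

section
/- For all integers N ≥ 1 and 0 ≤ p ≤ N−1: b_{N−p+1,p−1} + b_{N−p−1,p+1} + 2·Cat(p)·Cat(N−p) = 2·b_{N−p,p}, where Cat is the Catalan number and b_{ℓ,m} = C(2(ℓ+1), ℓ+1)·C(2(m+1), m+1)·(ℓ+1)(m+1)/(2(ℓ+m+1)(ℓ+m+2)). (For p = 0 interpret b with index −1 via the same rational formula, or restrict to 1 ≤ p ≤ N−1.) -/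
lemma cb_succ (n : ℕ) : (Nat.centralBinom (n + 1) : ℚ) =
    2 * (2 * n + 1) / (n + 1) * Nat.centralBinom n := by
  have h := Nat.succ_mul_centralBinom_succ n
  have h2 : ((n : ℚ) + 1) ≠ 0 := by positivity
  rw [div_mul_eq_mul_div, eq_div_iff h2]
  have : ((n + 1) * Nat.centralBinom (n + 1) : ℚ) = (2 * (2 * n + 1) * Nat.centralBinom n : ℚ) := by
    exact_mod_cast congrArg (Nat.cast : ℕ → ℚ) h
  push_cast at this ⊢
  linarith [this]

lemma cat_eq (n : ℕ) : (catalan n : ℚ) = (Nat.centralBinom n : ℚ) / (n + 1) := by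
  have h := succ_mul_catalan_eq_centralBinom n
  have h2 : ((n : ℚ) + 1) ≠ 0 := by positivity
  rw [eq_div_iff h2]
  have : (((n + 1) * catalan n : ℕ) : ℚ) = (Nat.centralBinom n : ℚ) := by exact_mod_cast congrArg (Nat.cast : ℕ → ℚ) h
  push_cast at this
  linarith [this]

lemma choose_eq_cb (n : ℕ) : (Nat.choose (2 * n) n : ℚ) = (Nat.centralBinom n : ℚ) := rfl

theorem stmt_5 (N p : ℕ) (hN : 1 ≤ N) (hp1 : 1 ≤ p) (hp : p ≤ N - 1) :
    b (N - p + 1) (p - 1) + b (N - p - 1) (p + 1) +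
        2 * (catalan p : ℚ) * (catalan (N - p) : ℚ) =
      2 * b (N - p) p := by
  obtain ⟨a, rfl⟩ : ∃ a, p = a + 1 := ⟨p - 1, by omega⟩
  obtain ⟨c, hc⟩ : ∃ c, N - (a + 1) = c + 1 := ⟨N - (a+1) - 1, by omega⟩
  rw [hc]
  have e1 : c + 1 + 1 = c + 2 := rfl
  have e2 : c + 1 - 1 = c := rfl
  have e3 : a + 1 - 1 = a := rfl
  rw [e1, e2, e3]
  simp only [b, choose_eq_cb, cat_eq]
  rw [show c + 2 + 1 = (c+2)+1 from rfl]
  rw [cb_succ (c+2), cb_succ (c+1), cb_succ c, cb_succ (a+2), cb_succ (a+1), cb_succ a]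
  have hx : (0:ℚ) < Nat.centralBinom a := by exact_mod_cast Nat.centralBinom_pos a
  have hy : (0:ℚ) < Nat.centralBinom c := by exact_mod_cast Nat.centralBinom_pos c
  have ha1 : ((a:ℚ) + 1) ≠ 0 := by positivity
  have ha2 : ((a:ℚ) + 2) ≠ 0 := by positivity
  have ha3 : ((a:ℚ) + 3) ≠ 0 := by positivity
  have hc1 : ((c:ℚ) + 1) ≠ 0 := by positivity
  have hc2 : ((c:ℚ) + 2) ≠ 0 := by positivity
  have hc3 : ((c:ℚ) + 3) ≠ 0 := by positivity
  push_cast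
  have hs1 : ((a:ℚ) + (c:ℚ) + 3) ≠ 0 := by positivity
  have hs2 : ((a:ℚ) + (c:ℚ) + 4) ≠ 0 := by positivity
  have hs3 : ((a:ℚ) + (c:ℚ) + 5) ≠ 0 := by positivity
  have hs4 : ((a:ℚ) + (c:ℚ) + 6) ≠ 0 := by positivity
  field_simp
  ring
end

section
/- For all ℓ ≥ 0 and m ≥ 1: ∑_{i=0}^{m} ( ∑_{j=1}^{i} Cat(j−1)·Cat(ℓ+m+1−j) + ∑_{j=1}^{m−i} Cat(ℓ+m+1−j)·Cat(j−1) ) = (m+1)·Cat(ℓ+m+1) − b_{ℓ,m}, where Cat is the Catalan number and b_{ℓ,m} = C(2(ℓ+1), ℓ+1)·C(2(m+1), m+1)·(ℓ+1)(m+1)/(2(ℓ+m+1)(ℓ+m+2)). -/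
private lemma catalan_cast (p : ℕ) :
    (catalan p : ℚ) = (Nat.choose (2 * p) p : ℚ) / (p + 1) := by
  rw [eq_div_iff (by positivity)]
  have h := succ_mul_catalan_eq_centralBinom p
  rw [Nat.centralBinom_eq_two_mul_choose] at h
  rw [mul_comm]
  exact_mod_cast h

private lemma choose_succ_cast (p : ℕ) :
    (Nat.choose (2 * (p + 1)) (p + 1) : ℚ) =
      2 * (2 * p + 1) * (Nat.choose (2 * p) p : ℚ) / (p + 1) := by
  rw [eq_div_iff (by positivity)]
  have h := Nat.succ_mul_centralBinom_succ p
  rw [Nat.centralBinom_eq_two_mul_choose, Nat.centralBinom_eq_two_mul_choose] at h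
  rw [mul_comm]
  exact_mod_cast h

private lemma partA (n : ℕ) (hn : 1 ≤ n) : ∀ p, p ≤ n →
    2 * ∑ j ∈ Finset.Icc 1 p, (catalan (j - 1) : ℚ) * (catalan (n - j) : ℚ)
      = (catalan n : ℚ) -
        (Nat.choose (2 * p) p : ℚ) * (Nat.choose (2 * (n - p)) (n - p) : ℚ) *
          ((n : ℚ) - 2 * p) / (n * (n + 1)) := by
  intro p
  induction p with
  | zero =>
    intro _
    simp only [Nat.sub_zero, Finset.Icc_eq_empty_of_lt (by norm_num : (1:ℕ) > 0),
      Finset.sum_empty, mul_zero]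
    rw [catalan_cast n]
    have h1 : (n : ℚ) ≠ 0 := by exact_mod_cast Nat.one_le_iff_ne_zero.mp hn
    field_simp
    simp only [Nat.choose_zero_right, Nat.cast_one]
    ring
  | succ p ih =>
    intro hpn
    obtain ⟨q, hq⟩ := Nat.exists_eq_add_of_le hpn
    have hsub1 : n - (p + 1) = q := by omega
    have hsub2 : n - p = q + 1 := by omega
    rw [Finset.sum_Icc_succ_top (by omega : 1 ≤ p + 1), mul_add,
      ih (by omega), hsub1, hsub2]
    have hcast : (n : ℚ) = (p : ℚ) + 1 + q := by exact_mod_cast congrArg (Nat.cast : ℕ → ℚ) hq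
    rw [hcast]
    simp only [Nat.add_sub_cancel]
    rw [catalan_cast p, catalan_cast q, choose_succ_cast p, choose_succ_cast q]
    have h1 : ((p : ℚ) + 1) ≠ 0 := by positivity
    have h2 : ((q : ℚ) + 1) ≠ 0 := by positivity
    have h3 : ((p : ℚ) + 1 + q) ≠ 0 := by positivity
    have h4 : ((p : ℚ) + 1 + q + 1) ≠ 0 := by positivity
    field_simp
    push_cast
    ring

private lemma partB (n : ℕ) : ∀ m, m + 1 ≤ n →
    ∑ i ∈ Finset.range (m + 1),
        (Nat.choose (2 * i) i : ℚ) * (Nat.choose (2 * (n - i)) (n - i) : ℚ) *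
          ((n : ℚ) - 2 * i)
      = (Nat.choose (2 * (m + 1)) (m + 1) : ℚ) *
          (Nat.choose (2 * (n - m)) (n - m) : ℚ) * ((m : ℚ) + 1) * ((n : ℚ) - m) / 2 := by
  intro m
  induction m with
  | zero =>
    intro _
    norm_num
    ring
  | succ m ih =>
    intro hmn
    obtain ⟨q, hq⟩ := Nat.exists_eq_add_of_le hmn
    have hsub1 : n - (m + 1) = q + 1 := by omega
    have hsub2 : n - m = q + 2 := by omega
    rw [Finset.sum_range_succ, ih (by omega), hsub1, hsub2]
    have hcast : (n : ℚ) = (m : ℚ) + 2 + q := by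
      have : (n : ℚ) = ((m + 2 + q : ℕ) : ℚ) := by exact_mod_cast congrArg (Nat.cast : ℕ → ℚ) hq
      push_cast at this; linarith
    rw [hcast]
    rw [choose_succ_cast (m + 1), choose_succ_cast (q + 1)]
    have h1 : ((m : ℚ) + 1 + 1) ≠ 0 := by positivity
    have h2 : ((q : ℚ) + 1) ≠ 0 := by positivity
    push_cast
    field_simp
    ring

theorem stmt_8 (l m : ℕ) (hm : 1 ≤ m) :
    (∑ i ∈ Finset.range (m + 1),
        ((∑ j ∈ Finset.Icc 1 i,
            (catalan (j - 1) : ℚ) * (catalan (l + m + 1 - j) : ℚ)) +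
          ∑ j ∈ Finset.Icc 1 (m - i),
            (catalan (l + m + 1 - j) : ℚ) * (catalan (j - 1) : ℚ))) =
      (m + 1 : ℚ) * (catalan (l + m + 1) : ℚ) - b l m := by
  set n := l + m + 1 with hn
  have hn1 : 1 ≤ n := by omega
  set S : ℕ → ℚ := fun i => ∑ j ∈ Finset.Icc 1 i, (catalan (j - 1) : ℚ) * (catalan (n - j) : ℚ)
    with hS
  have step1 : (∑ i ∈ Finset.range (m + 1),
      ((∑ j ∈ Finset.Icc 1 i, (catalan (j - 1) : ℚ) * (catalan (n - j) : ℚ)) +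
        ∑ j ∈ Finset.Icc 1 (m - i), (catalan (n - j) : ℚ) * (catalan (j - 1) : ℚ)))
      = ∑ i ∈ Finset.range (m + 1), 2 * S i := by
    rw [Finset.sum_add_distrib]
    have e1 : ∀ i, (∑ j ∈ Finset.Icc 1 (m - i), (catalan (n - j) : ℚ) * (catalan (j - 1) : ℚ))
        = S (m - i) := fun i => Finset.sum_congr rfl (fun j _ => mul_comm _ _)
    simp only [e1]
    have e2 : (∑ i ∈ Finset.range (m + 1), S (m - i)) = ∑ i ∈ Finset.range (m + 1), S i := by
      have := Finset.sum_range_reflect S (m + 1)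
      simpa using this
    rw [e2, ← Finset.sum_add_distrib]
    exact Finset.sum_congr rfl (fun i _ => by ring)
  rw [step1]
  have step2 : ∀ i ∈ Finset.range (m + 1), 2 * S i
      = (catalan n : ℚ) -
        (Nat.choose (2 * i) i : ℚ) * (Nat.choose (2 * (n - i)) (n - i) : ℚ) *
          ((n : ℚ) - 2 * i) / (n * (n + 1)) := by
    intro i hi
    exact partA n hn1 i (by simp at hi; omega)
  rw [Finset.sum_congr rfl step2, Finset.sum_sub_distrib, Finset.sum_const,
    Finset.card_range, ← Finset.sum_div, partB n m (by omega)]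
  have hsub : n - m = l + 1 := by omega
  rw [hsub, b]
  have hnl : (n : ℚ) = (l : ℚ) + m + 1 := by push_cast [hn]; ring
  rw [hnl]
  have h1 : ((l : ℚ) + m + 1) ≠ 0 := by positivity
  have h2 : ((l : ℚ) + m + 2) ≠ 0 := by positivity
  field_simp
  ring
end

section
/- For all ℓ, m ≥ 0, (m+1)·Cat(ℓ+m+1) ≥ b_{ℓ,m}, where Cat is the Catalan number and b_{ℓ,m} = C(2(ℓ+1), ℓ+1)·C(2(m+1), m+1)·(ℓ+1)(m+1)/(2(ℓ+m+1)(ℓ+m+2)). -/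
lemma key_cb (l : ℕ) : ∀ m : ℕ,
    (2 * l + 1) * Nat.centralBinom l * Nat.centralBinom (m + 1)
      ≤ (l + m + 1) * Nat.centralBinom (l + m + 1) := by
  intro m
  induction m with
  | zero =>
    have h := Nat.succ_mul_centralBinom_succ l
    have : (0 + 1 : ℕ).centralBinom = 2 := by decide
    simp only [Nat.add_zero, this]
    exact le_of_eq (by rw [h]; ring)
  | succ m ih =>
    have h1 := Nat.succ_mul_centralBinom_succ (m + 1)
    have h2 := Nat.succ_mul_centralBinom_succ (l + m + 1)
    refine Nat.le_of_mul_le_mul_left ?_ (show 0 < m + 2 by omega)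
    · calc (m + 2) * ((2 * l + 1) * l.centralBinom * Nat.centralBinom (m + 1 + 1))
          = (2 * l + 1) * l.centralBinom * ((m + 1 + 1) * Nat.centralBinom (m + 1 + 1)) := by
            ring
        _ = 2 * (2 * (m + 1) + 1) * ((2 * l + 1) * l.centralBinom * Nat.centralBinom (m + 1)) := by
            rw [h1]; ring
        _ ≤ 2 * (2 * (m + 1) + 1) * ((l + m + 1) * Nat.centralBinom (l + m + 1)) := by
            exact Nat.mul_le_mul_left _ ih
        _ ≤ (m + 2) * (2 * (2 * (l + m + 1) + 1) * Nat.centralBinom (l + m + 1)) := by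
            have : 2 * (2 * (m + 1) + 1) * (l + m + 1) ≤ (m + 2) * (2 * (2 * (l + m + 1) + 1)) := by
              nlinarith
            calc 2 * (2 * (m + 1) + 1) * ((l + m + 1) * Nat.centralBinom (l + m + 1))
                = (2 * (2 * (m + 1) + 1) * (l + m + 1)) * Nat.centralBinom (l + m + 1) := by ring
              _ ≤ ((m + 2) * (2 * (2 * (l + m + 1) + 1))) * Nat.centralBinom (l + m + 1) :=
                  Nat.mul_le_mul_right _ this
              _ = (m + 2) * (2 * (2 * (l + m + 1) + 1) * Nat.centralBinom (l + m + 1)) := by ring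
        _ = (m + 2) * ((l + (m + 1) + 1) * Nat.centralBinom (l + (m + 1) + 1)) := by
            have : l + (m + 1) + 1 = l + m + 1 + 1 := by ring
            rw [this, h2]

theorem stmt_19 (l m : ℕ) :
    b l m ≤ (m + 1 : ℚ) * (catalan (l + m + 1) : ℚ) := by
  have h1 : ((2 * l + 1 : ℕ) : ℚ) * (Nat.centralBinom l : ℚ) * (Nat.centralBinom (m + 1) : ℚ)
      ≤ ((l + m + 1 : ℕ) : ℚ) * (Nat.centralBinom (l + m + 1) : ℚ) := by
    exact_mod_cast key_cb l m
  have h2 : ((l : ℚ) + 1) * (Nat.centralBinom (l + 1) : ℚ)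
      = 2 * (2 * (l : ℚ) + 1) * (Nat.centralBinom l : ℚ) := by
    exact_mod_cast congrArg (Nat.cast : ℕ → ℚ) (Nat.succ_mul_centralBinom_succ l)
  have h3 : ((l : ℚ) + (m : ℚ) + 2) * (catalan (l + m + 1) : ℚ)
      = (Nat.centralBinom (l + m + 1) : ℚ) := by
    exact_mod_cast congrArg (Nat.cast : ℕ → ℚ) (succ_mul_catalan_eq_centralBinom (l + m + 1))
  rw [b, div_le_iff₀ (by positivity)]
  have hcb1 : (Nat.choose (2 * (l + 1)) (l + 1) : ℚ) = (Nat.centralBinom (l + 1) : ℚ) := rfl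
  have hcb2 : (Nat.choose (2 * (m + 1)) (m + 1) : ℚ) = (Nat.centralBinom (m + 1) : ℚ) := rfl
  rw [hcb1, hcb2]
  push_cast at h1
  calc (Nat.centralBinom (l + 1) : ℚ) * (Nat.centralBinom (m + 1) : ℚ) * (((l : ℚ) + 1) * ((m : ℚ) + 1))
      = ((m : ℚ) + 1) * (Nat.centralBinom (m + 1) : ℚ) * (((l : ℚ) + 1) * (Nat.centralBinom (l + 1) : ℚ)) := by ring
    _ = ((m : ℚ) + 1) * (Nat.centralBinom (m + 1) : ℚ) * (2 * (2 * (l : ℚ) + 1) * (Nat.centralBinom l : ℚ)) := by rw [h2]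
    _ = 2 * ((m : ℚ) + 1) * ((2 * (l : ℚ) + 1) * (Nat.centralBinom l : ℚ) * (Nat.centralBinom (m + 1) : ℚ)) := by ring
    _ ≤ 2 * ((m : ℚ) + 1) * (((l : ℚ) + (m : ℚ) + 1) * (Nat.centralBinom (l + m + 1) : ℚ)) := by
        apply mul_le_mul_of_nonneg_left _ (by positivity)
        exact h1
    _ = 2 * ((m : ℚ) + 1) * (((l : ℚ) + (m : ℚ) + 1) * (((l : ℚ) + (m : ℚ) + 2) * (catalan (l + m + 1) : ℚ))) := by rw [h3]
    _ = ((m : ℚ) + 1) * (catalan (l + m + 1) : ℚ) * (2 * ((l : ℚ) + (m : ℚ) + 1) * ((l : ℚ) + (m : ℚ) + 2)) := by ring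
end
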